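/- Let σ and τ be permutations of a finite type, where σ has cycle type Multiset.replicate s 2 (a product of s pairwise disjoint transpositions) and τ has cycle type {c} with c ≥ 2 (a single c-cycle). Suppose the norms are additive: N(στ) = s + (c−1). Let t be the number of points a with σ a ≠ a, τ a ≠ a, and σ a = the other endpoint of a's transposition lying outside the support of τ — equivalently, t is the number of transpositions of σ whose support meets the support of τ, which equals the cardinality of (support σ ∩ support τ). Then the cycle type of στ is Multiset.replicate (s−t) 2 + {c+t}: the product consists of s−t disjoint transpositions, one cycle of length c+t, and fixed points. -/

import Mathlib

/-- The norm of a permutation: the sum over its cycle type of (cycle length − 1). -/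
def permNorm {α : Type*} [Fintype α] [DecidableEq α] (σ : Equiv.Perm α) : ℕ :=
  (σ.cycleType.map (· - 1)).sum

open Equiv Equiv.Perm List

section Aux

variable {α : Type*} [Fintype α] [DecidableEq α]

lemma multiset_aux {m : Multiset ℕ} (h : ∀ x ∈ m, 1 ≤ x) :
    (m.map (· - 1)).sum + Multiset.card m = m.sum := by
  induction m using Multiset.induction with
  | empty => simp
  | cons a s ih =>
    simp only [Multiset.map_cons, Multiset.sum_cons, Multiset.card_cons]
    have h1 := h a (Multiset.mem_cons_self a s)
    have := ih (fun x hx => h x (Multiset.mem_cons_of_mem hx))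
    omega

lemma permNorm_add_card (π : Perm α) :
    permNorm π + Multiset.card π.cycleType = π.support.card := by
  rw [permNorm, multiset_aux (fun x hx => (one_lt_of_mem_cycleType hx).le), sum_cycleType]

lemma permNorm_disjoint {σ τ : Perm α} (h : Disjoint σ τ) :
    permNorm (σ * τ) = permNorm σ + permNorm τ := by
  rw [permNorm, h.cycleType_mul, Multiset.map_add, Multiset.sum_add]; rfl

lemma permNorm_cycle {π : Perm α} (h : π.IsCycle) :
    permNorm π + 1 = π.support.card := by
  have := permNorm_add_card π
  rw [h.cycleType] at this
  simpa using this

lemma permNorm_lt {π : Perm α} (h : π ≠ 1) : permNorm π < π.support.card := by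
  have := permNorm_add_card π
  have h2 : 0 < Multiset.card π.cycleType := card_cycleType_pos.mpr h
  omega

lemma merge_cycle {f : Perm α} (hf : f.IsCycle) {a b : α} (ha : a ∈ f.support)
    (hb : b ∉ f.support) :
    (Equiv.swap a b * f).IsCycle ∧ (Equiv.swap a b * f).support = insert b f.support := by
  have hfa : f a ≠ a := mem_support.mp ha
  have hform : (f.toList a).formPerm = f := by
    rw [formPerm_toList, hf.cycleOf_eq hfa]
  have hnd : (f.toList a).Nodup := nodup_toList f a
  have hlen : 2 ≤ (f.toList a).length := two_le_length_toList_iff_mem_support.mpr ha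
  have hbl : b ∉ f.toList a := by
    rw [mem_toList_iff]
    rintro ⟨hsc, -⟩
    obtain ⟨i, rfl⟩ := hsc
    exact hb (zpow_apply_mem_support.mpr ha)
  have hsupp : (f.toList a).toFinset = f.support := by
    conv_rhs => rw [← hform]
    rw [support_formPerm_of_nodup _ hnd (fun x hx => toList_ne_singleton f a x hx)]
  obtain ⟨hd, tl, hcons0⟩ := List.exists_cons_of_ne_nil
    (List.ne_nil_of_length_pos (by omega) : f.toList a ≠ [])
  have hhd : hd = a := by
    have := toList_getElem_zero f a ha
    simp [hcons0] at this
    exact this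
  have hcons : f.toList a = a :: tl := hhd ▸ hcons0
  rw [hcons] at hform hnd hlen hbl hsupp
  have hnd' : (b :: a :: tl).Nodup := List.nodup_cons.mpr ⟨hbl, hnd⟩
  have hkey : Equiv.swap a b * f = (b :: a :: tl).formPerm := by
    rw [List.formPerm_cons_cons, hform, Equiv.swap_comm]
  constructor
  · rw [hkey]
    exact List.isCycle_formPerm hnd' (by simp)
  · rw [hkey, support_formPerm_of_nodup _ hnd' (by
      intro x hx
      simpa using congr_arg List.length hx)]
    rw [List.toFinset_cons, hsupp]

lemma peel {σ : Perm α} {s : ℕ} (hσ : σ.cycleType = Multiset.replicate (s + 1) 2) :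
    ∃ (a b : α) (σ' : Perm α), a ≠ b ∧ σ = Equiv.swap a b * σ' ∧
      Disjoint (Equiv.swap a b) σ' ∧ σ'.cycleType = Multiset.replicate s 2 := by
  have h2 : (2 : ℕ) ∈ σ.cycleType := by
    rw [hσ]; exact Multiset.mem_replicate.mpr ⟨Nat.succ_ne_zero s, rfl⟩
  rw [cycleType_def, Multiset.mem_map] at h2
  obtain ⟨g, hg, hg2⟩ := h2
  have hgmem : g ∈ σ.cycleFactorsFinset := hg
  have hgc : g.IsCycle := (mem_cycleFactorsFinset_iff.mp hgmem).1
  obtain ⟨a, b, hab, rfl⟩ := card_support_eq_two.mp hg2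
  have hdisj : Disjoint (σ * (Equiv.swap a b)⁻¹) (Equiv.swap a b) :=
    disjoint_mul_inv_of_mem_cycleFactorsFinset hgmem
  refine ⟨a, b, σ * (Equiv.swap a b)⁻¹, hab, ?_, hdisj.symm, ?_⟩
  · rw [← hdisj.commute.eq, inv_mul_cancel_right]
  · have := cycleType_mul_inv_mem_cycleFactorsFinset_eq_sub hgmem
    simp only [Function.comp_apply] at hg2
    rw [hσ, hgc.cycleType, hg2] at this
    rw [this]
    show Multiset.replicate (s+1) 2 - {2} = _
    rw [Multiset.sub_singleton, Multiset.replicate_succ, Multiset.erase_cons_head]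

lemma factor_decomp {π g : Perm α} (hg : g ∈ π.cycleFactorsFinset) :
    π = g * (π * g⁻¹) ∧ Disjoint g (π * g⁻¹) ∧
      (π * g⁻¹).support = π.support \ g.support := by
  have hd : Disjoint (π * g⁻¹) g := disjoint_mul_inv_of_mem_cycleFactorsFinset hg
  have heq : π = g * (π * g⁻¹) := by rw [← hd.commute.eq, inv_mul_cancel_right]
  refine ⟨heq, hd.symm, ?_⟩
  have hsupp : π.support = g.support ∪ (π * g⁻¹).support := by
    conv_lhs => rw [heq]
    exact hd.symm.support_mul
  have hdis : _root_.Disjoint g.support (π * g⁻¹).support :=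
    disjoint_iff_disjoint_support.mp hd.symm
  rw [hsupp, Finset.union_sdiff_cancel_left hdis]

lemma swap_norm_le_aux {π : Perm α} {a b : α} (hab : a ≠ b) (ha : a ∈ π.support) :
    permNorm (Equiv.swap a b * π) ≤ permNorm π + 1 := by
  have hπa : π a ≠ a := mem_support.mp ha
  set ρ := π.cycleOf a with hρ
  have hρmem : ρ ∈ π.cycleFactorsFinset := cycleOf_mem_cycleFactorsFinset_iff.mpr ha
  have hρc : ρ.IsCycle := isCycle_cycleOf _ hπa
  have haρ : a ∈ ρ.support := by
    rw [mem_support, hρ, cycleOf_apply_self]; exact hπa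
  obtain ⟨heq, hd, hs2⟩ := factor_decomp hρmem
  set π₂ := π * ρ⁻¹ with hπ₂
  have hNπ : permNorm π = permNorm ρ + permNorm π₂ := by
    conv_lhs => rw [heq]
    exact permNorm_disjoint hd
  by_cases hbρ : b ∈ ρ.support
  · -- same cycle: split
    have hsub : (Equiv.swap a b * ρ).support ⊆ ρ.support := by
      intro x hx
      have hx' := support_mul_le (Equiv.swap a b) ρ hx
      rw [Finset.sup_eq_union, Finset.mem_union, support_swap hab] at hx'
      rcases hx' with hx' | hx'
      · simp only [Finset.mem_insert, Finset.mem_singleton] at hx'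
        rcases hx' with rfl | rfl
        · exact haρ
        · exact hbρ
      · exact hx'
    have hd2 : Disjoint (Equiv.swap a b * ρ) π₂ := by
      rw [disjoint_iff_disjoint_support]
      exact Finset.disjoint_of_subset_left hsub (disjoint_iff_disjoint_support.mp hd)
    have : Equiv.swap a b * π = (Equiv.swap a b * ρ) * π₂ := by
      conv_lhs => rw [heq]
      group
    rw [this, permNorm_disjoint hd2]
    have hb : permNorm (Equiv.swap a b * ρ) ≤ permNorm ρ := by
      by_cases h1 : Equiv.swap a b * ρ = 1
      · simp [h1, permNorm, cycleType_one]
      · have h2 := permNorm_lt h1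
        have h3 : (Equiv.swap a b * ρ).support.card ≤ ρ.support.card :=
          Finset.card_le_card hsub
        have h4 := permNorm_cycle hρc
        omega
    omega
  · by_cases hbπ : b ∈ π.support
    · -- different cycles: merge two cycles
      have hbπ₂ : b ∈ π₂.support := by rw [hs2]; exact Finset.mem_sdiff.mpr ⟨hbπ, hbρ⟩
      have hπ₂b : π₂ b ≠ b := mem_support.mp hbπ₂
      set ρb := π₂.cycleOf b with hρb
      have hρbmem : ρb ∈ π₂.cycleFactorsFinset := cycleOf_mem_cycleFactorsFinset_iff.mpr hbπ₂
      have hρbc : ρb.IsCycle := isCycle_cycleOf _ hπ₂b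
      obtain ⟨heq2, hd2, hs3⟩ := factor_decomp hρbmem
      set π₃ := π₂ * ρb⁻¹ with hπ₃
      have hNπ₂ : permNorm π₂ = permNorm ρb + permNorm π₃ := by
        conv_lhs => rw [heq2]
        exact permNorm_disjoint hd2
      set g := Equiv.swap a b * (ρ * ρb) with hg
      have hsub : g.support ⊆ ρ.support ∪ ρb.support := by
        intro x hx
        have hx' := support_mul_le (Equiv.swap a b) (ρ * ρb) hx
        rw [Finset.sup_eq_union, Finset.mem_union, support_swap hab] at hx'
        rw [Finset.mem_union]
        rcases hx' with hx' | hx'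
        · simp only [Finset.mem_insert, Finset.mem_singleton] at hx'
          rcases hx' with rfl | rfl
          · exact Or.inl haρ
          · refine Or.inr ?_
            rw [mem_support, hρb, cycleOf_apply_self]; exact hπ₂b
        · have hx'' := support_mul_le ρ ρb hx'
          rw [Finset.sup_eq_union, Finset.mem_union] at hx''
          exact hx''
      have hdis3 : Disjoint g π₃ := by
        rw [disjoint_iff_disjoint_support]
        refine Finset.disjoint_of_subset_left hsub ?_
        rw [Finset.disjoint_union_left]
        constructor
        · have : π₃.support ⊆ π₂.support := by rw [hs3]; exact Finset.sdiff_subset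
          exact Finset.disjoint_of_subset_right this
            (disjoint_iff_disjoint_support.mp hd)
        · rw [hs3]
          exact Finset.disjoint_sdiff
      have hsplit : Equiv.swap a b * π = g * π₃ := by
        rw [hg]
        conv_lhs => rw [heq, heq2]
        group
      rw [hsplit, permNorm_disjoint hdis3]
      have hbg : permNorm g ≤ permNorm ρ + permNorm ρb + 1 := by
        by_cases h1 : g = 1
        · simp [h1, permNorm, cycleType_one]
        · have h2 := permNorm_lt h1
          have h3 : g.support.card ≤ ρ.support.card + ρb.support.card :=
            (Finset.card_le_card hsub).trans (Finset.card_union_le _ _)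
          have h4 := permNorm_cycle hρc
          have h5 := permNorm_cycle hρbc
          omega
      omega
    · -- b is fixed: merge fixed point
      have hbρ2 : b ∉ ρ.support := hbρ
      obtain ⟨hgc, hgs⟩ := merge_cycle hρc haρ hbρ2
      have hd2 : Disjoint (Equiv.swap a b * ρ) π₂ := by
        rw [disjoint_iff_disjoint_support, hgs, hs2]
        rw [Finset.disjoint_iff_ne]
        rintro x hx y hy rfl
        simp only [Finset.mem_insert] at hx
        rcases hx with rfl | hx
        · exact hbπ (Finset.mem_sdiff.mp hy).1
        · exact (Finset.mem_sdiff.mp hy).2 hx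
      have : Equiv.swap a b * π = (Equiv.swap a b * ρ) * π₂ := by
        conv_lhs => rw [heq]
        group
      rw [this, permNorm_disjoint hd2]
      have h4 := permNorm_cycle hρc
      have h5 := permNorm_cycle hgc
      rw [hgs] at h5
      rw [Finset.card_insert_of_notMem hbρ2] at h5
      omega

lemma swap_permNorm_le (π : Perm α) {a b : α} (hab : a ≠ b) :
    permNorm (Equiv.swap a b * π) ≤ permNorm π + 1 := by
  by_cases ha : a ∈ π.support
  · exact swap_norm_le_aux hab ha
  · by_cases hb : b ∈ π.support
    · rw [Equiv.swap_comm]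
      exact swap_norm_le_aux hab.symm hb
    · have hd : Disjoint (Equiv.swap a b) π := by
        rw [disjoint_iff_disjoint_support, support_swap hab, Finset.disjoint_iff_ne]
        rintro x hx y hy rfl
        simp only [Finset.mem_insert, Finset.mem_singleton] at hx
        rcases hx with rfl | rfl
        · exact ha hy
        · exact hb hy
      rw [permNorm_disjoint hd]
      have h1 := permNorm_cycle (isCycle_swap hab)
      rw [support_swap hab] at h1
      have : ({a, b} : Finset α).card = 2 := by
        rw [Finset.card_insert_of_notMem (by simpa using hab), Finset.card_singleton]
      omega

lemma permNorm_replicate {δ : Perm α} {k : ℕ} (h : δ.cycleType = Multiset.replicate k 2) :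
    permNorm δ = k := by
  rw [permNorm, h, Multiset.map_replicate, Multiset.sum_replicate]
  simp

lemma permNorm_prod_le {s : ℕ} : ∀ {σ : Perm α}, σ.cycleType = Multiset.replicate s 2 →
    ∀ τ : Perm α, permNorm (σ * τ) ≤ s + permNorm τ := by
  induction s with
  | zero =>
    intro σ hσ τ
    have hσ1 : σ = 1 := by
      rw [← cycleType_eq_zero, hσ, Multiset.replicate_zero]
    simp [hσ1]
  | succ n ih =>
    intro σ hσ τ
    obtain ⟨a, b, σ', hab, rfl, hdisj, hσ'⟩ := peel hσ
    rw [mul_assoc]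
    have h1 := swap_permNorm_le (σ' * τ) hab
    have h2 := ih hσ' τ
    omega

lemma merge_step {δ ρ : Perm α} {a b : α} (hab : a ≠ b) (hd : Disjoint δ ρ)
    (hρc : ρ.IsCycle) (ha : a ∈ ρ.support) (hbδ : b ∉ δ.support) (hbρ : b ∉ ρ.support) :
    Equiv.swap a b * (δ * ρ) = δ * (Equiv.swap a b * ρ) ∧
    Disjoint δ (Equiv.swap a b * ρ) ∧ (Equiv.swap a b * ρ).IsCycle ∧
    (Equiv.swap a b * ρ).support = insert b ρ.support := by
  have haδ : a ∉ δ.support := Finset.disjoint_right.mp (disjoint_iff_disjoint_support.mp hd) ha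
  have hcomm : Disjoint (Equiv.swap a b) δ := by
    rw [disjoint_iff_disjoint_support, support_swap hab, Finset.disjoint_left]
    intro x hx
    simp only [Finset.mem_insert, Finset.mem_singleton] at hx
    rcases hx with rfl | rfl
    · exact haδ
    · exact hbδ
  obtain ⟨hgc, hgs⟩ := merge_cycle hρc ha hbρ
  refine ⟨?_, ?_, hgc, hgs⟩
  · rw [← mul_assoc, hcomm.commute.eq, mul_assoc]
  · rw [disjoint_iff_disjoint_support, hgs, Finset.disjoint_right]
    intro x hx
    simp only [Finset.mem_insert] at hx
    rcases hx with rfl | hx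
    · exact hbδ
    · exact Finset.disjoint_right.mp (disjoint_iff_disjoint_support.mp hd) hx

lemma main_structure : ∀ (s : ℕ) (σ τ : Perm α), σ.cycleType = Multiset.replicate s 2 →
    τ.IsCycle → permNorm (σ * τ) = s + permNorm τ →
    ∃ (δ ρ : Perm α) (k : ℕ), σ * τ = δ * ρ ∧ Disjoint δ ρ ∧ ρ.IsCycle ∧
      τ.support ⊆ ρ.support ∧ δ.cycleType = Multiset.replicate k 2 ∧
      (σ * τ).support = σ.support ∪ τ.support := by
  intro s
  induction s with
  | zero =>
    intro σ τ hσ hτ _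
    have hσ1 : σ = 1 := by rw [← cycleType_eq_zero, hσ, Multiset.replicate_zero]
    subst hσ1
    exact ⟨1, τ, 0, by simp, disjoint_one_left τ, hτ, subset_rfl, by simp [cycleType_one],
      by simp⟩
  | succ n ih =>
    intro σ τ hσ hτ hN
    obtain ⟨a, b, σ', hab, rfl, hdisj, hσ'⟩ := peel hσ
    have hdsupp := disjoint_iff_disjoint_support.mp hdisj
    rw [support_swap hab] at hdsupp
    have haσ' : a ∉ σ'.support :=
      Finset.disjoint_left.mp hdsupp (Finset.mem_insert_self a {b})
    have hbσ' : b ∉ σ'.support :=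
      Finset.disjoint_left.mp hdsupp (Finset.mem_insert_of_mem (Finset.mem_singleton_self b))
    have hNle : permNorm (σ' * τ) ≤ n + permNorm τ := permNorm_prod_le hσ' τ
    have hNge : permNorm (Equiv.swap a b * σ' * τ) ≤ permNorm (σ' * τ) + 1 := by
      rw [mul_assoc]; exact swap_permNorm_le _ hab
    have hNeq : permNorm (σ' * τ) = n + permNorm τ := by omega
    obtain ⟨δ, ρ, k, hprod, hdisj2, hρc, hτρ, hδct, hsupp⟩ := ih σ' τ hσ' hτ hNeq
    have hSδρ : σ'.support ∪ τ.support = δ.support ∪ ρ.support := by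
      rw [← hsupp, hprod, hdisj2.support_mul]
    have hσsupp : (Equiv.swap a b * σ').support = {a, b} ∪ σ'.support := by
      rw [hdisj.support_mul, support_swap hab]
    have hassoc : Equiv.swap a b * σ' * τ = Equiv.swap a b * (δ * ρ) := by
      rw [mul_assoc, hprod]
    by_cases ha : a ∈ τ.support
    · have haρ : a ∈ ρ.support := hτρ ha
      have haδ : a ∉ δ.support :=
        Finset.disjoint_right.mp (disjoint_iff_disjoint_support.mp hdisj2) haρ
      by_cases hb : b ∈ τ.support
      · -- both in the cycle: contradiction with the norm
        exfalso
        have hbρ : b ∈ ρ.support := hτρ hb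
        have hbδ : b ∉ δ.support :=
          Finset.disjoint_right.mp (disjoint_iff_disjoint_support.mp hdisj2) hbρ
        have hcomm : Disjoint (Equiv.swap a b) δ := by
          rw [disjoint_iff_disjoint_support, support_swap hab, Finset.disjoint_left]
          intro x hx
          simp only [Finset.mem_insert, Finset.mem_singleton] at hx
          rcases hx with rfl | rfl
          · exact haδ
          · exact hbδ
        have heq2 : Equiv.swap a b * σ' * τ = δ * (Equiv.swap a b * ρ) := by
          rw [hassoc, ← mul_assoc, hcomm.commute.eq, mul_assoc]
        set g := Equiv.swap a b * ρ with hg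
        have hsub : g.support ⊆ ρ.support := by
          intro x hx
          have hx' := support_mul_le (Equiv.swap a b) ρ hx
          rw [Finset.sup_eq_union, Finset.mem_union, support_swap hab] at hx'
          rcases hx' with hx' | hx'
          · simp only [Finset.mem_insert, Finset.mem_singleton] at hx'
            rcases hx' with rfl | rfl
            · exact haρ
            · exact hbρ
          · exact hx'
        have hdg : Disjoint δ g := by
          rw [disjoint_iff_disjoint_support]
          exact Finset.disjoint_of_subset_right hsub
            (disjoint_iff_disjoint_support.mp hdisj2)
        have hNg : permNorm (Equiv.swap a b * σ' * τ) = permNorm δ + permNorm g := by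
          rw [heq2, permNorm_disjoint hdg]
        have hNδ : permNorm δ = k := permNorm_replicate hδct
        have hNρ := permNorm_cycle hρc
        have hNsum : permNorm (σ' * τ) = permNorm δ + permNorm ρ := by
          rw [hprod, permNorm_disjoint hdisj2]
        have h2le : 2 ≤ ρ.support.card := hρc.two_le_card_support
        have h10 : permNorm (1 : Perm α) = 0 := by simp [permNorm, cycleType_one]
        by_cases hg1 : g = 1
        · rw [hg1, h10] at hNg
          omega
        · have := permNorm_lt hg1
          have := Finset.card_le_card hsub
          omega
      · -- merge b into the cycle
        have hbδ : b ∉ δ.support := by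
          intro hmem
          have : b ∈ σ'.support ∪ τ.support := by
            rw [hSδρ]; exact Finset.mem_union_left _ hmem
          rcases Finset.mem_union.mp this with h | h
          · exact hbσ' h
          · exact hb h
        have hbρ : b ∉ ρ.support := by
          intro hmem
          have : b ∈ σ'.support ∪ τ.support := by
            rw [hSδρ]; exact Finset.mem_union_right _ hmem
          rcases Finset.mem_union.mp this with h | h
          · exact hbσ' h
          · exact hb h
        obtain ⟨heq2, hdg, hgc, hgs⟩ := merge_step hab hdisj2 hρc haρ hbδ hbρ
        refine ⟨δ, Equiv.swap a b * ρ, k, by rw [hassoc, heq2], hdg, hgc,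
          hτρ.trans (by rw [hgs]; exact Finset.subset_insert _ _), hδct, ?_⟩
        rw [hassoc, heq2, hdg.support_mul, hgs, hσsupp, Finset.union_insert, ← hSδρ]
        ext x
        simp only [Finset.mem_insert, Finset.mem_union, Finset.mem_singleton]
        constructor
        · rintro (rfl | h | h) <;> tauto
        · rintro (((rfl | rfl) | h) | h)
          · exact Or.inr (Or.inr ha)
          · tauto
          · tauto
          · tauto
    · by_cases hb : b ∈ τ.support
      · -- symmetric merge: a is the fixed point
        have hbρ : b ∈ ρ.support := hτρ hb
        have haδ : a ∉ δ.support := by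
          intro hmem
          have : a ∈ σ'.support ∪ τ.support := by
            rw [hSδρ]; exact Finset.mem_union_left _ hmem
          rcases Finset.mem_union.mp this with h | h
          · exact haσ' h
          · exact ha h
        have haρ : a ∉ ρ.support := by
          intro hmem
          have : a ∈ σ'.support ∪ τ.support := by
            rw [hSδρ]; exact Finset.mem_union_right _ hmem
          rcases Finset.mem_union.mp this with h | h
          · exact haσ' h
          · exact ha h
        obtain ⟨heq2, hdg, hgc, hgs⟩ := merge_step hab.symm hdisj2 hρc hbρ haδ haρ
        rw [Equiv.swap_comm b a] at heq2 hdg hgc hgs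
        refine ⟨δ, Equiv.swap a b * ρ, k, by rw [hassoc, heq2], hdg, hgc,
          hτρ.trans (by rw [hgs]; exact Finset.subset_insert _ _), hδct, ?_⟩
        rw [hassoc, heq2, hdg.support_mul, hgs, hσsupp, Finset.union_insert, ← hSδρ]
        ext x
        simp only [Finset.mem_insert, Finset.mem_union, Finset.mem_singleton]
        constructor
        · rintro (rfl | h | h) <;> tauto
        · rintro (((rfl | rfl) | h) | h)
          · tauto
          · exact Or.inr (Or.inr hb)
          · tauto
          · tauto
      · -- both fixed: new disjoint transposition
        have hanotS : a ∉ σ'.support ∪ τ.support := by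
          rw [Finset.mem_union]; rintro (h | h); exacts [haσ' h, ha h]
        have hbnotS : b ∉ σ'.support ∪ τ.support := by
          rw [Finset.mem_union]; rintro (h | h); exacts [hbσ' h, hb h]
        have hswδ : Disjoint (Equiv.swap a b) δ := by
          rw [disjoint_iff_disjoint_support, support_swap hab, Finset.disjoint_left]
          intro x hx
          simp only [Finset.mem_insert, Finset.mem_singleton] at hx
          intro hmem
          have : x ∈ σ'.support ∪ τ.support := by
            rw [hSδρ]; exact Finset.mem_union_left _ hmem
          rcases hx with rfl | rfl
          · exact hanotS this
          · exact hbnotS this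
        have hswρ : _root_.Disjoint (Equiv.swap a b).support ρ.support := by
          rw [support_swap hab, Finset.disjoint_left]
          intro x hx
          simp only [Finset.mem_insert, Finset.mem_singleton] at hx
          intro hmem
          have : x ∈ σ'.support ∪ τ.support := by
            rw [hSδρ]; exact Finset.mem_union_right _ hmem
          rcases hx with rfl | rfl
          · exact hanotS this
          · exact hbnotS this
        have hdg : Disjoint (Equiv.swap a b * δ) ρ := by
          rw [disjoint_iff_disjoint_support, hswδ.support_mul, Finset.disjoint_union_left]
          exact ⟨hswρ, disjoint_iff_disjoint_support.mp hdisj2⟩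
        have hct : (Equiv.swap a b * δ).cycleType = Multiset.replicate (k + 1) 2 := by
          rw [hswδ.cycleType_mul, hδct, (isCycle_swap hab).cycleType, card_support_swap hab]
          rw [Multiset.replicate_succ]
          rfl
        refine ⟨Equiv.swap a b * δ, ρ, k + 1, by rw [hassoc, ← mul_assoc], hdg, hρc, hτρ,
          hct, ?_⟩
        rw [hassoc, ← mul_assoc, hdg.support_mul, hswδ.support_mul, support_swap hab, hσsupp]
        rw [Finset.union_assoc, Finset.union_assoc, hSδρ]

end Aux

/-- If `σ` is a product of `s` disjoint transpositions, `τ` a single `c`-cycle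
(`c ≥ 2`), the norms are additive (`N(στ) = s + (c−1)`), and `t` is the number of
transpositions of `σ` meeting the support of `τ` (i.e. `t = |support σ ∩ support τ|`),
then the cycle type of `στ` is `(2^{s−t}, c+t)`. -/
theorem geodesic_pair_cycleType {α : Type*} [Fintype α] [DecidableEq α]
    (σ τ : Equiv.Perm α) (s c t : ℕ) (hc : 2 ≤ c)
    (hσ : σ.cycleType = Multiset.replicate s 2) (hτ : τ.cycleType = {c})
    (hadd : permNorm (σ * τ) = s + (c - 1))
    (ht : t = (σ.support ∩ τ.support).card) :
    (σ * τ).cycleType = Multiset.replicate (s - t) 2 + {c + t} := by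
  have hτc : τ.IsCycle := card_cycleType_eq_one.mp (by rw [hτ]; rfl)
  have hNτ : permNorm τ = c - 1 := by rw [permNorm, hτ]; simp
  have hN : permNorm (σ * τ) = s + permNorm τ := by rw [hNτ]; exact hadd
  obtain ⟨δ, ρ, k, hprod, hdisj, hρc, hτρ, hδct, hsupp⟩ := main_structure s σ τ hσ hτc hN
  have hcardσ : σ.support.card = 2 * s := by
    have h := sum_cycleType σ
    rw [hσ, Multiset.sum_replicate, smul_eq_mul] at h
    omega
  have hcardτ : τ.support.card = c := by
    have h := sum_cycleType τ
    rw [hτ] at h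
    simpa using h.symm
  set r := ρ.support.card with hr
  have hct : (σ * τ).cycleType = Multiset.replicate k 2 + {r} := by
    rw [hprod, hdisj.cycleType_mul, hδct, hρc.cycleType]
  have hN2 : permNorm (σ * τ) = k + (r - 1) := by
    rw [permNorm, hct, Multiset.map_add, Multiset.sum_add, Multiset.map_replicate,
      Multiset.sum_replicate, Multiset.map_singleton, Multiset.sum_singleton]
    simp
  have hr2 : 2 ≤ r := hρc.two_le_card_support
  have hsc : (σ * τ).support.card + (σ.support ∩ τ.support).card
      = σ.support.card + τ.support.card := by
    rw [hsupp]; exact Finset.card_union_add_card_inter _ _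
  have hsum : (σ * τ).support.card = 2 * k + r := by
    have h := sum_cycleType (σ * τ)
    rw [hct, Multiset.sum_add, Multiset.sum_replicate, smul_eq_mul,
      Multiset.sum_singleton] at h
    omega
  rw [← ht] at hsc
  rw [hadd] at hN2
  have hk : k = s - t ∧ r = c + t := by omega
  rw [hct, hk.1, hk.2]
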